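/- For any coupling range r ≥ 1 and any integers q1, q2, the (q1,q2)-twisted state is an equilibrium of the 2D lattice Kuramoto model with r-nearest neighbor coupling; that is, for every (i,j) ∈ (ZMod L)², the sum over all (k,ℓ) of A((i,j),(k,ℓ))·sin(θ_{k,ℓ} − θ_{i,j}) equals 0, where θ is the (q1,q2)-twisted state. -/

import Mathlib

noncomputable section
open Real Finset Matrix

/-- Toroidal squared distance on the 2D lattice `(ZMod L)²`:
`min(|i−k|, L−|i−k|)² + min(|j−ℓ|, L−|j−ℓ|)²` with representatives in `{0,…,L−1}`. -/
def torDist2 (L : ℕ) (x y : ZMod L × ZMod L) : ℕ :=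
  (min ((x.1.val : ℤ) - (y.1.val : ℤ)).natAbs
      (L - ((x.1.val : ℤ) - (y.1.val : ℤ)).natAbs)) ^ 2
  + (min ((x.2.val : ℤ) - (y.2.val : ℤ)).natAbs
      (L - ((x.2.val : ℤ) - (y.2.val : ℤ)).natAbs)) ^ 2

/-- Adjacency of the `r`-nearest neighbor coupling:
`A(x,y) = 1` iff `0 < d(x,y) ≤ r²`, else `0`. -/
def adjR2 (L : ℕ) (r : ℝ) (x y : ZMod L × ZMod L) : ℝ :=
  if 0 < torDist2 L x y ∧ (torDist2 L x y : ℝ) ≤ r ^ 2 then 1 else 0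

/-- The `(q1,q2)`-twisted state `θ_{i,j} = 2π q1 i / L + 2π q2 j / L + C`. -/
def twisted2 (L : ℕ) (q1 q2 : ℤ) (C : ℝ) (x : ZMod L × ZMod L) : ℝ :=
  2 * π * q1 * x.1.val / L + 2 * π * q2 * x.2.val / L + C

lemma key1 (L : ℕ) [NeZero L] (a b : ZMod L) :
    min ((a.val : ℤ) - b.val).natAbs (L - ((a.val : ℤ) - b.val).natAbs)
      = min ((a - b).val) (L - (a - b).val) := by
  have ha := ZMod.val_lt a
  have hb := ZMod.val_lt b
  have hval : ∀ c d : ZMod L, d.val ≤ c.val → (c - d).val = c.val - d.val := by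
    intro c d h
    have hc := ZMod.val_lt c
    have : c - d = ((c.val - d.val : ℕ) : ZMod L) := by
      push_cast [Nat.cast_sub h]
      simp [ZMod.natCast_val, ZMod.cast_id]
    rw [this, ZMod.val_cast_of_lt (by omega)]
  rcases le_or_gt b.val a.val with h | h
  · have := hval a b h
    omega
  · have h1 := hval b a h.le
    have hne : b - a ≠ 0 := by
      intro h0
      rw [sub_eq_zero] at h0
      rw [h0] at h
      omega
    have h2 : (a - b).val = L - (b.val - a.val) := by
      have he : a - b = -(b - a) := by ring
      rw [he, ZMod.neg_val, if_neg hne, h1]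
    omega

lemma key_neg (L : ℕ) [NeZero L] (c : ZMod L) :
    min ((-c).val) (L - (-c).val) = min c.val (L - c.val) := by
  have hc := ZMod.val_lt c
  rcases eq_or_ne c 0 with rfl | h
  · simp
  · rw [ZMod.neg_val, if_neg h]
    have : c.val ≠ 0 := fun h0 => h ((ZMod.val_eq_zero c).mp h0)
    omega

lemma torDist2_reflect (L : ℕ) [NeZero L] (x y : ZMod L × ZMod L) :
    torDist2 L x (x.1 + x.1 - y.1, x.2 + x.2 - y.2) = torDist2 L x y := by
  unfold torDist2
  rw [key1, key1, key1, key1]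
  have h1 : x.1 - (x.1 + x.1 - y.1) = -(x.1 - y.1) := by ring
  have h2 : x.2 - (x.2 + x.2 - y.2) = -(x.2 - y.2) := by ring
  simp only [h1, h2, key_neg]

def phi (L : ℕ) (q1 q2 : ℤ) (z : ZMod L × ZMod L) : ℝ :=
  2 * π * q1 * z.1.val / L + 2 * π * q2 * z.2.val / L

lemma val_modeq (L : ℕ) [NeZero L] (u v w : ZMod L) (h : u + v = w) :
    ∃ k : ℤ, (u.val : ℤ) + v.val - w.val = L * k := by
  have h0 : (((u.val : ℤ) + v.val - w.val : ℤ) : ZMod L) = 0 := by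
    push_cast
    simp only [ZMod.natCast_val, ZMod.cast_id]
    rw [← h]; ring
  exact (ZMod.intCast_zmod_eq_zero_iff_dvd _ L).mp h0

lemma phi_add (L : ℕ) [NeZero L] (q1 q2 : ℤ) (u v w : ZMod L × ZMod L)
    (h : u + v = w) :
    ∃ m : ℤ, phi L q1 q2 u + phi L q1 q2 v = phi L q1 q2 w + 2 * π * m := by
  obtain ⟨k1, hk1⟩ := val_modeq L u.1 v.1 w.1 (by rw [← h]; rfl)
  obtain ⟨k2, hk2⟩ := val_modeq L u.2 v.2 w.2 (by rw [← h]; rfl)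
  have hL : (L : ℝ) ≠ 0 := Nat.cast_ne_zero.mpr (NeZero.ne L)
  refine ⟨q1 * k1 + q2 * k2, ?_⟩
  have hk1' : (u.1.val : ℝ) + v.1.val - w.1.val = L * k1 := by exact_mod_cast hk1
  have hk2' : (u.2.val : ℝ) + v.2.val - w.2.val = L * k2 := by exact_mod_cast hk2
  unfold phi
  simp only [ZMod.natCast_val] at hk1' hk2' ⊢
  field_simp
  push_cast
  linear_combination (q1 : ℝ) * hk1' + (q2 : ℝ) * hk2'

lemma twisted_sub (L : ℕ) (q1 q2 : ℤ) (C : ℝ) (u v : ZMod L × ZMod L) :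
    twisted2 L q1 q2 C u - twisted2 L q1 q2 C v = phi L q1 q2 u - phi L q1 q2 v := by
  unfold twisted2 phi; ring

/-- For any coupling range `r ≥ 1` and any integers `q1, q2`, the `(q1,q2)`-twisted state is an
equilibrium of the 2D lattice Kuramoto model with `r`-nearest neighbor coupling. -/
theorem twisted_state_is_equilibrium_2D (L : ℕ) [NeZero L] (r : ℝ) (hr : 1 ≤ r)
    (q1 q2 : ℤ) (C : ℝ) (x : ZMod L × ZMod L) :
    ∑ y : ZMod L × ZMod L,
      adjR2 L r x y * Real.sin (twisted2 L q1 q2 C y - twisted2 L q1 q2 C x) = 0 := by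
  classical
  set f : ZMod L × ZMod L → ℝ :=
    fun y => adjR2 L r x y * Real.sin (twisted2 L q1 q2 C y - twisted2 L q1 q2 C x) with hf
  have hinv : Function.Involutive
      (fun y : ZMod L × ZMod L => (x.1 + x.1 - y.1, x.2 + x.2 - y.2)) := by
    intro y
    simp
  set σ := hinv.toPerm with hσdef
  have hσ : ∀ y, f (σ y) = - f y := by
    intro y
    have hσy : σ y = (x.1 + x.1 - y.1, x.2 + x.2 - y.2) := rfl
    have hadj : adjR2 L r x (σ y) = adjR2 L r x y := by
      unfold adjR2
      rw [hσy, torDist2_reflect]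
    have hsum : σ y + y = x + x := by
      rw [hσy]
      ext <;> simp <;> ring
    obtain ⟨m1, hm1⟩ := phi_add L q1 q2 (σ y) y (x + x) hsum
    obtain ⟨m2, hm2⟩ := phi_add L q1 q2 x x (x + x) rfl
    have hsin : Real.sin (twisted2 L q1 q2 C (σ y) - twisted2 L q1 q2 C x)
        = - Real.sin (twisted2 L q1 q2 C y - twisted2 L q1 q2 C x) := by
      rw [twisted_sub, twisted_sub]
      have harg : phi L q1 q2 (σ y) - phi L q1 q2 x
          = -(phi L q1 q2 y - phi L q1 q2 x) + ((m1 - m2 : ℤ) : ℝ) * (2 * π) := by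
        push_cast
        linarith [hm1, hm2]
      rw [harg, Real.sin_add_int_mul_two_pi, Real.sin_neg]
    simp only [hf]
    rw [hadj, hsin]
    ring
  have h1 : ∑ y, f (σ y) = ∑ y, f y := Equiv.sum_comp σ f
  have h2 : ∑ y, f y = - ∑ y, f y := by
    calc ∑ y, f y = ∑ y, f (σ y) := h1.symm
      _ = ∑ y, -(f y) := by simp only [hσ]
      _ = - ∑ y, f y := by rw [Finset.sum_neg_distrib]
  linarith
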